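/- Let F be the formal power series over ℚ whose coefficient of q^n is (n+1)·σ₁(n+1), i.e., F = Σ_{k≥1} k·σ₁(k)·q^{k−1}. Then for every natural number g ≥ 1, the Bryan–Leung count N_{g,3} := g · (coefficient of q^3 in F^{g−1}) satisfies N_{g,3} = 4g(g−1)(9g² − 27g + 25). -/

import Mathlib

/-- The Bryan–Leung power series `F = Σ_{k≥1} k·σ₁(k)·q^{k−1}` over `ℚ`,
whose coefficient of `q^n` is `(n+1)·σ₁(n+1)`. -/
noncomputable def FBL : PowerSeries ℚ :=
  PowerSeries.mk fun n => (((n + 1) * ArithmeticFunction.sigma 1 (n + 1) : ℕ) : ℚ)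

lemma FBL_coeff (n : ℕ) :
    PowerSeries.coeff (R := ℚ) n FBL = (((n + 1) * ArithmeticFunction.sigma 1 (n + 1) : ℕ) : ℚ) := by
  simp [FBL]

lemma FBL_coeff0 : PowerSeries.coeff (R := ℚ) 0 FBL = 1 := by
  rw [FBL_coeff]; norm_num [ArithmeticFunction.sigma_apply]

lemma FBL_coeff1 : PowerSeries.coeff (R := ℚ) 1 FBL = 6 := by
  rw [FBL_coeff]; norm_num [ArithmeticFunction.sigma_apply]

lemma FBL_coeff2 : PowerSeries.coeff (R := ℚ) 2 FBL = 12 := by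
  rw [FBL_coeff]; norm_num [ArithmeticFunction.sigma_apply]

lemma FBL_coeff3 : PowerSeries.coeff (R := ℚ) 3 FBL = 28 := by
  rw [FBL_coeff]
  norm_num [ArithmeticFunction.sigma_apply,
    show Nat.divisors 4 = {1, 2, 4} from by decide]

lemma FBL_pow_coeffs (m : ℕ) :
    PowerSeries.coeff (R := ℚ) 0 (FBL ^ m) = 1 ∧
    PowerSeries.coeff (R := ℚ) 1 (FBL ^ m) = 6 * m ∧
    PowerSeries.coeff (R := ℚ) 2 (FBL ^ m) = 18 * (m : ℚ) ^ 2 - 6 * m ∧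
    PowerSeries.coeff (R := ℚ) 3 (FBL ^ m) =
      36 * (m : ℚ) ^ 3 - 36 * (m : ℚ) ^ 2 + 28 * m := by
  induction m with
  | zero => simp
  | succ m ih =>
    obtain ⟨h0, h1, h2, h3⟩ := ih
    rw [pow_succ]
    refine ⟨?_, ?_, ?_, ?_⟩ <;>
    · rw [PowerSeries.coeff_mul, Finset.Nat.sum_antidiagonal_eq_sum_range_succ_mk]
      simp only [Finset.sum_range_succ, Finset.sum_range_zero]
      norm_num [h0, h1, h2, h3, FBL_coeff0, FBL_coeff1, FBL_coeff2, FBL_coeff3] <;>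
        (push_cast; ring)

/-- The Bryan–Leung count `N_{g,3} := g · (coefficient of q^3 in F^{g−1})`
is given by the node polynomial of Table (5.1). -/
theorem N_g_3 (g : ℕ) (hg : 1 ≤ g) :
    (g : ℚ) * (PowerSeries.coeff (R := ℚ) 3) (FBL ^ (g - 1)) =
      4 * (g : ℚ) * ((g : ℚ) - 1) * (9 * (g : ℚ) ^ 2 - 27 * (g : ℚ) + 25) := by
  have h := (FBL_pow_coeffs (g - 1)).2.2.2
  have hm : ((g - 1 : ℕ) : ℚ) = (g : ℚ) - 1 := by
    push_cast [Nat.cast_sub hg]; ring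
  rw [h, hm]
  ring
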